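/- For the renewal process on Z^+ started at 0 with interarrival law η{j} = (α/Γ(2-α))·Γ(j-α+1)/Γ(j+2) (j ≥ 1) in the case α = 3/2, the renewal measure satisfies P(j ∈ S) = (1/2)·(Γ(j+1/2)/(Γ(1/2)Γ(j+1)) + 1) for all j ≥ 0; equivalently, Σ_{j≥0} P(j ∈ S) s^j = (1/2)(1/√(1-s) + 1/(1-s)) for s ∈ (0,1). -/

import Mathlib

open Real

namespace Stmt9Aux

open Finset

noncomputable def cr (n : ℕ) : ℝ := (Nat.centralBinom n : ℝ)

lemma cr_pos (n : ℕ) : 0 < cr n := by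
  have := Nat.centralBinom_pos n
  unfold cr; exact_mod_cast this

lemma cr_zero : cr 0 = 1 := by simp [cr, Nat.centralBinom_zero]

lemma cr_one : cr 1 = 2 := by norm_num [cr, Nat.centralBinom]

lemma cr_rec (n : ℕ) : ((n:ℝ)+1) * cr (n+1) = 2*(2*(n:ℝ)+1) * cr n := by
  have h := Nat.succ_mul_centralBinom_succ n
  have h2 : (((n+1) * Nat.centralBinom (n+1) : ℕ) : ℝ) = ((2*(2*n+1)*Nat.centralBinom n : ℕ) : ℝ) := by
    norm_cast
  push_cast at h2
  simpa [cr] using h2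

lemma cr_succ (n : ℕ) : cr (n+1) = 2*(2*(n:ℝ)+1) * cr n / ((n:ℝ)+1) := by
  have h := cr_rec n
  field_simp
  linarith [h]

noncomputable def Gc (i j : ℕ) : ℝ :=
  cr j * cr (i-j) * (j:ℝ) * ((i:ℝ)-2-2*(j:ℝ)) / ((i:ℝ)*((j:ℝ)+1))

lemma cert {i j : ℕ} (h : j < i) :
    ((i:ℝ)+2)^2 * (cr j * cr (i-j) / (((j:ℝ)+1)*((j:ℝ)+2)))
      - 2*(2*(i:ℝ)+1)*((i:ℝ)+3) * (cr j * cr (i-1-j) / (((j:ℝ)+1)*((j:ℝ)+2)))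
      = Gc i (j+1) - Gc i j := by
  obtain ⟨k, rfl⟩ : ∃ k, i = j + k + 1 := ⟨i - j - 1, by omega⟩
  have e1 : j + k + 1 - j = k + 1 := by omega
  have e2 : j + k + 1 - 1 - j = k := by omega
  have e3 : j + k + 1 - (j + 1) = k := by omega
  unfold Gc
  rw [e1, e2, e3]
  push_cast
  rw [cr_succ k, cr_succ j]
  have hj1 : ((j:ℝ)+1) ≠ 0 := by positivity
  have hj2 : ((j:ℝ)+2) ≠ 0 := by positivity
  have hk1 : ((k:ℝ)+1) ≠ 0 := by positivity
  have hi : ((j:ℝ)+(k:ℝ)+1) ≠ 0 := by positivity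
  field_simp
  ring

noncomputable def L (i : ℕ) : ℝ :=
  ∑ j ∈ range i, cr j * cr (i-1-j) / (((j:ℝ)+1)*((j:ℝ)+2))

lemma Lrec {i : ℕ} (hi : 1 ≤ i) :
    ((i:ℝ)+2)^2 * L (i+1) = 2*(2*(i:ℝ)+1)*((i:ℝ)+3) * L i := by
  have hL1 : L (i+1) = (∑ j ∈ range i, cr j * cr (i-j) / (((j:ℝ)+1)*((j:ℝ)+2)))
      + cr i * cr 0 / (((i:ℝ)+1)*((i:ℝ)+2)) := by
    unfold L
    rw [sum_range_succ]
    simp only [Nat.add_sub_cancel, Nat.sub_self]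
  have hsub : (∑ j ∈ range i, (((i:ℝ)+2)^2 * (cr j * cr (i-j) / (((j:ℝ)+1)*((j:ℝ)+2)))
      - 2*(2*(i:ℝ)+1)*((i:ℝ)+3) * (cr j * cr (i-1-j) / (((j:ℝ)+1)*((j:ℝ)+2)))))
      = ∑ j ∈ range i, (Gc i (j+1) - Gc i j) := by
    apply sum_congr rfl; intro j hj
    exact cert (mem_range.mp hj)
  have key : ((i:ℝ)+2)^2 * L (i+1) - 2*(2*(i:ℝ)+1)*((i:ℝ)+3) * L i
      = (∑ j ∈ range i, (Gc i (j+1) - Gc i j))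
        + ((i:ℝ)+2)^2 * (cr i * cr 0 / (((i:ℝ)+1)*((i:ℝ)+2))) := by
    rw [hL1]
    unfold L
    rw [mul_add, mul_sum, mul_sum]
    rw [sum_sub_distrib] at hsub
    linarith [hsub]
  rw [sum_range_sub (fun j => Gc i j)] at key
  have hGi : Gc i i = - (cr i * ((i:ℝ)+2) / ((i:ℝ)+1)) := by
    unfold Gc
    rw [Nat.sub_self, cr_zero]
    have h1 : (i:ℝ) ≠ 0 := by
      have : (0:ℝ) < i := by exact_mod_cast hi
      linarith
    have h2 : ((i:ℝ)+1) ≠ 0 := by positivity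
    field_simp
    ring
  have hG0 : Gc i 0 = 0 := by unfold Gc; simp
  rw [hGi, hG0, cr_zero] at key
  have h2 : ((i:ℝ)+1) ≠ 0 := by positivity
  have h3 : ((i:ℝ)+2) ≠ 0 := by positivity
  have : ((i:ℝ)+2)^2 * (cr i * 1 / (((i:ℝ)+1)*((i:ℝ)+2))) = cr i * ((i:ℝ)+2) / ((i:ℝ)+1) := by
    field_simp
  rw [this] at key
  linarith [key]

lemma Lval : ∀ i : ℕ, 1 ≤ i → L i = cr i * ((i:ℝ)+2) / (6*((i:ℝ)+1)) := by
  intro i hi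
  induction i with
  | zero => omega
  | succ n ih =>
    rcases Nat.eq_or_lt_of_le hi with h1 | h1
    · have hn : n = 0 := by omega
      subst hn
      unfold L
      simp [cr_zero, cr_one]
      norm_num
    · have hn : 1 ≤ n := by omega
      have hrec := Lrec hn
      rw [ih hn] at hrec
      have h2 : ((n:ℝ)+1) ≠ 0 := by positivity
      have h3 : ((n:ℝ)+2) ≠ 0 := by positivity
      rw [cr_succ n]
      push_cast
      have h4 : ((n:ℝ)+2)^2 ≠ 0 := by positivity
      have : L (n+1) = 2*(2*(n:ℝ)+1)*((n:ℝ)+3) * (cr n * ((n:ℝ)+2) / (6*((n:ℝ)+1))) / ((n:ℝ)+2)^2 := by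
        field_simp at hrec ⊢
        linarith [hrec]
      rw [this]
      field_simp
      ring

lemma gamma_half (j : ℕ) :
    Real.Gamma ((j:ℝ) + 1/2) = Real.Gamma (1/2) * (cr j * (Nat.factorial j : ℝ) / 4^j) := by
  induction j with
  | zero => simp [cr_zero]
  | succ n ih =>
    have h : ((n+1:ℕ):ℝ) + 1/2 = ((n:ℝ)+1/2) + 1 := by push_cast; ring
    have hne : ((n:ℝ)+1/2) ≠ 0 := by positivity
    rw [h, Real.Gamma_add_one hne, ih, cr_succ n, Nat.factorial_succ]
    have h1 : ((n:ℝ)+1) ≠ 0 := by positivity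
    push_cast
    field_simp
    ring

lemma eta_val {η : ℕ → ℝ}
    (hη : ∀ j : ℕ, 1 ≤ j →
      η j = (3/2) / Real.Gamma (2 - 3/2) *
        (Real.Gamma ((j : ℝ) - 3/2 + 1) / Real.Gamma ((j : ℝ) + 2)))
    {k : ℕ} (hk : 1 ≤ k) :
    η k = 6 * cr (k-1) / (4^k * (k:ℝ) * ((k:ℝ)+1)) := by
  obtain ⟨m, rfl⟩ : ∃ m, k = m + 1 := ⟨k - 1, by omega⟩
  rw [hη _ hk]
  have e0 : (2 - 3/2 : ℝ) = 1/2 := by norm_num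
  have e1 : ((m+1:ℕ):ℝ) - 3/2 + 1 = (m:ℝ) + 1/2 := by push_cast; ring
  have e2 : ((m+1:ℕ):ℝ) + 2 = ((m+2:ℕ):ℝ) + 1 := by push_cast; ring
  rw [e0, e1, e2, Real.Gamma_nat_eq_factorial, gamma_half m]
  simp only [Nat.add_sub_cancel]
  have hf2 : (Nat.factorial (m+2) : ℝ) = ((m:ℝ)+2) * (((m:ℝ)+1) * (Nat.factorial m : ℝ)) := by
    rw [Nat.factorial_succ, Nat.factorial_succ]; push_cast; ring
  rw [hf2]
  have hG : Real.Gamma (1/2) ≠ 0 := ne_of_gt (Real.Gamma_pos_of_pos (by norm_num))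
  have hfm : (Nat.factorial m : ℝ) ≠ 0 := by positivity
  have h1 : ((m:ℝ)+1) ≠ 0 := by positivity
  have h2 : ((m:ℝ)+2) ≠ 0 := by positivity
  have h4 : ((4:ℝ)^m) ≠ 0 := by positivity
  push_cast
  field_simp
  ring

section Eta
variable {η : ℕ → ℝ}
  (hval : ∀ k : ℕ, 1 ≤ k → η k = 6 * cr (k-1) / (4^k * (k:ℝ) * ((k:ℝ)+1)))

include hval

lemma eta_partial : ∀ i : ℕ, (∑ j ∈ range i, η (j+1)) = 1 - cr i / (((i:ℝ)+1) * 4^i) := by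
  intro i
  induction i with
  | zero => simp [cr_zero]
  | succ n ih =>
    rw [sum_range_succ, ih, hval (n+1) (by omega)]
    simp only [Nat.add_sub_cancel]
    rw [cr_succ n]
    have h1 : ((n:ℝ)+1) ≠ 0 := by positivity
    have h2 : ((n:ℝ)+2) ≠ 0 := by positivity
    have h4 : ((4:ℝ)^n) ≠ 0 := by positivity
    push_cast
    field_simp
    ring

lemma eta_sum {i : ℕ} (hi : 1 ≤ i) :
    (∑ j ∈ range i, η (i-j)) = 1 - cr i / (((i:ℝ)+1) * 4^i) := by
  rw [← eta_partial hval i]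
  rw [← Finset.sum_range_reflect (fun j => η (i - j)) i]
  apply sum_congr rfl; intro j hj
  have : i - (i - 1 - j) = j + 1 := by have := mem_range.mp hj; omega
  rw [this]

lemma eta_wsum {i : ℕ} (hi : 1 ≤ i) :
    (∑ j ∈ range i, η (i-j) * (cr j / 4^j)) = cr i * ((i:ℝ)+2) / (4^i * ((i:ℝ)+1)) := by
  have step1 : (∑ j ∈ range i, η (i-j) * (cr j / 4^j))
      = ∑ j ∈ range i, (6/4^i) * (cr j * cr (i-1-j) / (((i-j:ℕ):ℝ) * (((i-j:ℕ):ℝ)+1))) := by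
    apply sum_congr rfl; intro j hj
    have hj' : j < i := mem_range.mp hj
    rw [hval (i-j) (by omega)]
    have e1 : i - j - 1 = i - 1 - j := by omega
    have e4 : (4:ℝ)^(i-j) * 4^j = 4^i := by
      rw [← pow_add]; congr 1; omega
    have hij : (0:ℝ) < ((i-j:ℕ):ℝ) := by
      have : 0 < i - j := by omega
      exact_mod_cast this
    have h4j : ((4:ℝ)^j) ≠ 0 := by positivity
    have h4ij : ((4:ℝ)^(i-j)) ≠ 0 := by positivity
    have h1 : ((i-j:ℕ):ℝ) ≠ 0 := ne_of_gt hij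
    have h2 : ((i-j:ℕ):ℝ)+1 ≠ 0 := by positivity
    have h4i : ((4:ℝ)^i) ≠ 0 := by positivity
    rw [e1]
    field_simp
    rw [← e4]
    ring
  rw [step1, ← mul_sum]
  have step2 : (∑ j ∈ range i, (cr j * cr (i-1-j) / (((i-j:ℕ):ℝ) * (((i-j:ℕ):ℝ)+1)))) = L i := by
    unfold L
    rw [← Finset.sum_range_reflect
      (fun j => cr j * cr (i-1-j) / (((j:ℝ)+1)*((j:ℝ)+2))) i]
    apply sum_congr rfl; intro j hj
    have hj' : j < i := mem_range.mp hj
    have e1 : i - 1 - (i - 1 - j) = j := by omega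
    have e2 : ((i-1-j:ℕ):ℝ) + 1 = ((i-j:ℕ):ℝ) := by
      have : (i-1-j) + 1 = i - j := by omega
      exact_mod_cast congrArg (Nat.cast : ℕ → ℝ) this
    have e3 : ((i-1-j:ℕ):ℝ) + 2 = ((i-j:ℕ):ℝ) + 1 := by
      rw [← e2]; ring
    rw [e1, e2, e3]
    ring
  rw [step2, Lval i hi]
  have h1 : ((i:ℝ)+1) ≠ 0 := by positivity
  have h4i : ((4:ℝ)^i) ≠ 0 := by positivity
  field_simp

lemma conv_eq {i : ℕ} (hi : 1 ≤ i) :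
    (∑ j ∈ range i, η (i-j) * ((cr j / 4^j + 1)/2)) = (cr i / 4^i + 1)/2 := by
  have expand : (∑ j ∈ range i, η (i-j) * ((cr j / 4^j + 1)/2))
      = (1/2) * (∑ j ∈ range i, η (i-j) * (cr j / 4^j)) + (1/2) * (∑ j ∈ range i, η (i-j)) := by
    rw [mul_sum, mul_sum, ← sum_add_distrib]
    apply sum_congr rfl; intro j hj
    ring
  rw [expand, eta_wsum hval hi, eta_sum hval hi]
  have h1 : ((i:ℝ)+1) ≠ 0 := by positivity
  have h4i : ((4:ℝ)^i) ≠ 0 := by positivity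
  field_simp
  ring

end Eta

lemma convA : ∀ n : ℕ, (∑ k ∈ range (n+1), Nat.centralBinom k * Nat.centralBinom (n-k)) = 4^n := by
  intro n
  induction n with
  | zero => simp [Nat.centralBinom_zero]
  | succ n ih =>
    have key : (n+1) * (∑ k ∈ range (n+2), Nat.centralBinom k * Nat.centralBinom (n+1-k))
        = (n+1) * (4 * ∑ k ∈ range (n+1), Nat.centralBinom k * Nat.centralBinom (n-k)) := by
      rw [mul_sum]
      have split : ∀ k ∈ range (n+2),
          (n+1) * (Nat.centralBinom k * Nat.centralBinom (n+1-k))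
          = (n+1-k) * Nat.centralBinom (n+1-k) * Nat.centralBinom k
            + k * Nat.centralBinom k * Nat.centralBinom (n+1-k) := by
        intro k hk
        have hk' : k < n + 2 := mem_range.mp hk
        obtain ⟨m, hm, hsum⟩ : ∃ m, n+1-k = m ∧ n+1 = m + k := ⟨n+1-k, rfl, by omega⟩
        rw [hm, hsum]
        ring
      rw [sum_congr rfl split, sum_add_distrib]
      have first : (∑ k ∈ range (n+2), (n+1-k) * Nat.centralBinom (n+1-k) * Nat.centralBinom k)
          = ∑ k ∈ range (n+1), 2 * (2*(n-k)+1) * Nat.centralBinom (n-k) * Nat.centralBinom k := by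
        rw [sum_range_succ]
        simp only [Nat.sub_self, Nat.zero_mul, zero_mul, add_zero]
        apply sum_congr rfl; intro k hk
        have hk' : k < n + 1 := mem_range.mp hk
        have e : n + 1 - k = (n - k) + 1 := by omega
        rw [e, Nat.succ_mul_centralBinom_succ]
      have second : (∑ k ∈ range (n+2), k * Nat.centralBinom k * Nat.centralBinom (n+1-k))
          = ∑ k ∈ range (n+1), 2 * (2*k+1) * Nat.centralBinom k * Nat.centralBinom (n-k) := by
        rw [Finset.sum_range_succ']
        simp only [Nat.zero_mul, zero_mul, add_zero]
        apply sum_congr rfl; intro k hk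
        have e : n + 1 - (k+1) = n - k := by omega
        rw [e, Nat.succ_mul_centralBinom_succ]
      rw [first, second, ← sum_add_distrib]
      have rhs : (n+1) * (4 * ∑ k ∈ range (n+1), Nat.centralBinom k * Nat.centralBinom (n-k))
          = ∑ k ∈ range (n+1), (n+1)*(4*(Nat.centralBinom k * Nat.centralBinom (n-k))) := by
        rw [mul_sum, mul_sum]
      rw [rhs]
      apply sum_congr rfl; intro k hk
      have hk' : k < n + 1 := mem_range.mp hk
      have e : 2 * (2*(n-k)+1) + 2*(2*k+1) = 4*(n+1) := by omega
      calc 2 * (2*(n-k)+1) * Nat.centralBinom (n-k) * Nat.centralBinom k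
            + 2*(2*k+1) * Nat.centralBinom k * Nat.centralBinom (n-k)
          = (2 * (2*(n-k)+1) + 2*(2*k+1)) * (Nat.centralBinom k * Nat.centralBinom (n-k)) := by ring
        _ = (n+1)*(4*(Nat.centralBinom k * Nat.centralBinom (n-k))) := by rw [e]; ring
    have := Nat.eq_of_mul_eq_mul_left (by omega : 0 < n+1) key
    rw [this, ih]
    ring

lemma cr_le (n : ℕ) : cr n ≤ 4^n := by
  have h : Nat.centralBinom n ≤ 4^n := by
    have h1 : Nat.centralBinom n ≤ ∑ m ∈ range (2*n+1), (2*n).choose m := by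
      apply Finset.single_le_sum (f := fun m => (2*n).choose m)
      · intro i _; exact Nat.zero_le _
      · exact mem_range.mpr (by omega)
    rw [Nat.sum_range_choose] at h1
    calc Nat.centralBinom n ≤ 2^(2*n) := h1
      _ = 4^n := by rw [pow_mul]; norm_num
  calc cr n = ((Nat.centralBinom n : ℕ) : ℝ) := rfl
    _ ≤ ((4^n : ℕ) : ℝ) := by exact_mod_cast h
    _ = 4^n := by push_cast; ring

lemma convA_real (n : ℕ) : (∑ k ∈ range (n+1), (cr k / 4^k) * (cr (n-k) / 4^(n-k))) = 1 := by
  have step : ∀ k ∈ range (n+1), (cr k / 4^k) * (cr (n-k) / 4^(n-k))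
      = (cr k * cr (n-k)) / 4^n := by
    intro k hk
    have hk' : k < n+1 := mem_range.mp hk
    have e : (4:ℝ)^k * 4^(n-k) = 4^n := by rw [← pow_add]; congr 1; omega
    rw [div_mul_div_comm, e]
  rw [sum_congr rfl step, ← sum_div]
  have : (∑ k ∈ range (n+1), cr k * cr (n-k)) = 4^n := by
    have := convA n
    have h2 : ((∑ k ∈ range (n+1), Nat.centralBinom k * Nat.centralBinom (n-k) : ℕ) : ℝ) = ((4^n : ℕ) : ℝ) := by
      norm_cast
    push_cast at h2
    convert h2 using 2
    rfl
  rw [this]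
  field_simp

lemma summable_a {s : ℝ} (hs0 : 0 < s) (hs1 : s < 1) :
    Summable (fun j : ℕ => (cr j / 4^j) * s^j) := by
  refine Summable.of_nonneg_of_le ?_ ?_ (summable_geometric_of_lt_one hs0.le hs1)
  · intro j
    have := (cr_pos j).le
    positivity
  · intro j
    have h1 : cr j / 4^j ≤ 1 := by
      rw [div_le_one (by positivity)]
      exact cr_le j
    calc (cr j / 4^j) * s^j ≤ 1 * s^j :=
          mul_le_mul_of_nonneg_right h1 (by positivity)
      _ = s^j := one_mul _

lemma gen_fn {s : ℝ} (hs0 : 0 < s) (hs1 : s < 1) :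
    (∑' j : ℕ, (cr j / 4^j) * s^j) = 1 / Real.sqrt (1 - s) := by
  set f : ℕ → ℝ := fun j => (cr j / 4^j) * s^j with hf
  have hfnn : ∀ j, 0 ≤ f j := by
    intro j
    have := (cr_pos j).le
    positivity
  have hsummable : Summable f := summable_a hs0 hs1
  have hnorm : Summable fun j => ‖f j‖ := by
    simpa [Real.norm_of_nonneg (hfnn _)] using hsummable
  have hsq : (∑' j, f j) * (∑' j, f j) = (1 - s)⁻¹ := by
    rw [tsum_mul_tsum_eq_tsum_sum_range_of_summable_norm hnorm hnorm]
    have inner : ∀ n : ℕ, (∑ k ∈ range (n+1), f k * f (n-k)) = s^n := by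
      intro n
      have : ∀ k ∈ range (n+1), f k * f (n-k)
          = ((cr k / 4^k) * (cr (n-k) / 4^(n-k))) * s^n := by
        intro k hk
        have hk' : k < n+1 := mem_range.mp hk
        have e : s^k * s^(n-k) = s^n := by rw [← pow_add]; congr 1; omega
        simp only [hf]
        rw [← e]; ring
      rw [sum_congr rfl this, ← sum_mul, convA_real n, one_mul]
    rw [tsum_congr inner, tsum_geometric_of_lt_one hs0.le hs1]
  have h1s : 0 < 1 - s := by linarith
  have hfpos : 0 < ∑' j, f j := by
    have h0 : (1:ℝ) ≤ ∑' j, f j := by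
      have := Summable.le_tsum hsummable 0 (fun j _ => hfnn j)
      simpa [hf, cr_zero] using this
    linarith
  have : (∑' j, f j) = Real.sqrt ((1-s)⁻¹) := by
    rw [← Real.sqrt_sq hfpos.le]
    congr 1
    rw [sq]; exact hsq
  rw [this, Real.sqrt_inv, one_div]

end Stmt9Aux

open Stmt9Aux Finset

/-- Renewal measure of the range of the fixation line of the Beta(1/2,3/2)-coalescent
(case α = 3/2): interarrival law `η j = (α/Γ(2-α)) Γ(j-α+1)/Γ(j+2)` with `α = 3/2`. -/
theorem stmt_9 (η u : ℕ → ℝ)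
    (hη : ∀ j : ℕ, 1 ≤ j →
      η j = (3/2) / Real.Gamma (2 - 3/2) *
        (Real.Gamma ((j : ℝ) - 3/2 + 1) / Real.Gamma ((j : ℝ) + 2)))
    (hu0 : u 0 = 1)
    (hu : ∀ i : ℕ, 1 ≤ i → u i = ∑ j ∈ Finset.range i, η (i - j) * u j) :
    (∀ j : ℕ, u j = 1/2 *
        (Real.Gamma ((j : ℝ) + 1/2) / (Real.Gamma (1/2) * Real.Gamma ((j : ℝ) + 1)) + 1)) ∧
    ∀ s ∈ Set.Ioo (0:ℝ) 1,
      (∑' j : ℕ, u j * s ^ j) = 1/2 * (1 / Real.sqrt (1 - s) + 1 / (1 - s)) := by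
  have hval : ∀ k : ℕ, 1 ≤ k → η k = 6 * cr (k-1) / (4^k * (k:ℝ) * ((k:ℝ)+1)) :=
    fun k hk => eta_val hη hk
  -- closed form for u
  have hv : ∀ j : ℕ, u j = (cr j / 4^j + 1)/2 := by
    intro j
    induction j using Nat.strong_induction_on with
    | _ j IH =>
      rcases Nat.eq_zero_or_pos j with h0 | h1
      · subst h0
        rw [hu0, cr_zero]
        norm_num
      · rw [hu j h1]
        have hcong : ∀ k ∈ range j, η (j-k) * u k = η (j-k) * ((cr k / 4^k + 1)/2) := by
          intro k hk
          rw [IH k (mem_range.mp hk)]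
        rw [sum_congr rfl hcong, conv_eq hval h1]
  constructor
  · intro j
    rw [hv j, gamma_half j, Real.Gamma_nat_eq_factorial j]
    have hG : Real.Gamma (1/2) ≠ 0 := ne_of_gt (Real.Gamma_pos_of_pos (by norm_num))
    have hfj : (Nat.factorial j : ℝ) ≠ 0 := by positivity
    have h4j : ((4:ℝ)^j) ≠ 0 := by positivity
    field_simp
  · rintro s ⟨hs0, hs1⟩
    have hterm : ∀ j : ℕ, u j * s^j = 1/2 * ((cr j / 4^j) * s^j) + 1/2 * s^j := by
      intro j
      rw [hv j]
      ring
    have hsum1 : Summable (fun j : ℕ => 1/2 * ((cr j / 4^j) * s^j)) :=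
      (summable_a hs0 hs1).mul_left _
    have hsum2 : Summable (fun j : ℕ => 1/2 * s^j) :=
      (summable_geometric_of_lt_one hs0.le hs1).mul_left _
    rw [tsum_congr hterm, Summable.tsum_add hsum1 hsum2, tsum_mul_left, tsum_mul_left,
      gen_fn hs0 hs1, tsum_geometric_of_lt_one hs0.le hs1]
    rw [inv_eq_one_div]
    ring
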